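/- If x ∈ Affine_z with z < c·e, then the radial projection π = π(x) satisfies (c·π − z*)/(c·e − z*) ≤ (f̂*_{μ,z} − f̂_μ(x) + μ ln n)·((c·e − z*)/(c·e − z)). -/

import Mathlib

open RealInnerProductSpace

lemma homog_eval_mul {d n : ℕ} (P : MvPolynomial (Fin d) ℝ) (hP : P.IsHomogeneous n)
    (a : ℝ) (v : Fin d → ℝ) :
    MvPolynomial.eval (fun i => a * v i) P = a ^ n * MvPolynomial.eval v P := by
  rw [MvPolynomial.eval_eq, MvPolynomial.eval_eq, Finset.mul_sum]
  refine Finset.sum_congr rfl fun m hm => ?_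
  have hco : MvPolynomial.coeff m P ≠ 0 := MvPolynomial.mem_support_iff.mp hm
  have hdeg : m.degree = n := by
    rw [Finsupp.degree_eq_weight_one]; exact hP hco
  have : ∏ i ∈ m.support, (a * v i) ^ m i
      = a ^ n * ∏ i ∈ m.support, (v i) ^ m i := by
    rw [← hdeg, Finsupp.degree]
    simp_rw [mul_pow]
    rw [Finset.prod_mul_distrib, Finset.prod_pow_eq_pow_sum]; rfl
  rw [this]; ring

lemma cone_smul_mem_interior {V : Type*} [NormedAddCommGroup V] [NormedSpace ℝ V]
    {K : Set V} (hKcone : ∀ t : ℝ, 0 < t → ∀ x ∈ K, t • x ∈ K)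
    {t : ℝ} (ht : 0 < t) {u : V} (hu : u ∈ interior K) : t • u ∈ interior K := by
  have hsub : (fun y : V => t • y) '' interior K ⊆ K := by
    rintro _ ⟨w, hw, rfl⟩
    exact hKcone t ht w (interior_subset hw)
  have hopen : IsOpen ((fun y : V => t • y) '' interior K) :=
    isOpenMap_smul₀ ht.ne' _ isOpen_interior
  exact interior_maximal hsub hopen ⟨u, hu, rfl⟩

lemma cone_add_mem_interior {V : Type*} [NormedAddCommGroup V] [NormedSpace ℝ V]
    {K : Set V} (hKconv : Convex ℝ K)
    (hKcone : ∀ t : ℝ, 0 < t → ∀ x ∈ K, t • x ∈ K)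
    {u v : V} (hu : u ∈ interior K) (hv : v ∈ K) : u + v ∈ interior K := by
  have hm : (1/2 : ℝ) • u + (1/2 : ℝ) • v ∈ interior K :=
    hKconv.combo_interior_self_mem_interior hu hv (by norm_num) (by norm_num) (by norm_num)
  have h2 := cone_smul_mem_interior hKcone (t := 2) two_pos hm
  have : (2 : ℝ) • ((1/2 : ℝ) • u + (1/2 : ℝ) • v) = u + v := by
    rw [smul_add, smul_smul, smul_smul]; norm_num
  rwa [this] at h2

lemma cone_add_mem {V : Type*} [NormedAddCommGroup V] [NormedSpace ℝ V]
    {K : Set V} (hKconv : Convex ℝ K)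
    (hKcone : ∀ t : ℝ, 0 < t → ∀ x ∈ K, t • x ∈ K)
    {u v : V} (hu : u ∈ K) (hv : v ∈ K) : u + v ∈ K := by
  have hm : (1/2 : ℝ) • u + (1/2 : ℝ) • v ∈ K :=
    hKconv hu hv (by norm_num) (by norm_num) (by norm_num)
  have h2 := hKcone 2 two_pos _ hm
  have : (2 : ℝ) • ((1/2 : ℝ) • u + (1/2 : ℝ) • v) = u + v := by
    rw [smul_add, smul_smul, smul_smul]; norm_num
  rwa [this] at h2

set_option maxHeartbeats 3200000 in
/-- Lemma 3.5: if `x ∈ Affine_z` with `z < c·e`, then `π = π(x)` satisfies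
`(c·π − z*)/(c·e − z*) ≤ (f̂*_{μ,z} − f̂_μ(x) + μ ln n)·((c·e − z*)/(c·e − z))`. -/
theorem relative_error_le_smoothed_gap
    {d n : ℕ} (hn : 0 < n)
    (K : Set (EuclideanSpace ℝ (Fin d)))
    (hKclosed : IsClosed K) (hKconv : Convex ℝ K)
    (hKcone : ∀ t : ℝ, 0 < t → ∀ x ∈ K, t • x ∈ K)
    (P : MvPolynomial (Fin d) ℝ) (hP : P.IsHomogeneous n)
    (e : EuclideanSpace ℝ (Fin d)) (he : e ∈ interior K)
    (hcomp : interior K =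
      connectedComponentIn {x | MvPolynomial.eval (fun i => x i) P ≠ 0} e)
    (q : EuclideanSpace ℝ (Fin d) → Polynomial ℝ)
    (hq : ∀ x t, (q x).eval t = MvPolynomial.eval (fun i => x i - t * e i) P)
    (hroots : ∀ x, Multiset.card (q x).roots = n)
    (lamMin : EuclideanSpace ℝ (Fin d) → ℝ)
    (hlam : ∀ x, lamMin x = sSup {l : ℝ | x - l • e ∈ K})
    (S : AffineSubspace ℝ (EuclideanSpace ℝ (Fin d))) (c : EuclideanSpace ℝ (Fin d))
    (heS : e ∈ S)
    (z zstar : ℝ) (hz : z < ⟪c, e⟫)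
    (hzstar : ∃ x, (x ∈ S ∧ x ∈ K ∧ ∀ y, y ∈ S → y ∈ K → ⟪c, x⟫ ≤ ⟪c, y⟫) ∧
      ⟪c, x⟫ = zstar)
    (μ : ℝ) (hμ : 0 < μ)
    (fhat : EuclideanSpace ℝ (Fin d) → ℝ)
    (hfhat : ∀ x, fhat x =
      -(μ * Real.log (((q x).roots.map (fun lam => Real.exp (-(lam / μ)))).sum)))
    (fstar : ℝ)
    (hfstar : fstar = sSup {r : ℝ | ∃ y, y ∈ S ∧ ⟪c, y⟫ = z ∧ r = fhat y})
    (x : EuclideanSpace ℝ (Fin d)) (hxS : x ∈ S) (hxz : ⟪c, x⟫ = z)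
    (π : EuclideanSpace ℝ (Fin d))
    (hπ : π = e + (1 - lamMin x)⁻¹ • (x - e)) :
    (⟪c, π⟫ - zstar) / (⟪c, e⟫ - zstar) ≤
      (fstar - fhat x + μ * Real.log n) * ((⟪c, e⟫ - zstar) / (⟪c, e⟫ - z)) := by
  classical
  obtain ⟨xs, ⟨hxsS, hxsK, hxsmin⟩, hxsz⟩ := hzstar
  set E : ℝ := ⟪c, e⟫ with hE
  have heK : e ∈ K := interior_subset he
  have hzstarleE : zstar ≤ E := hxsz ▸ hxsmin e heS heK
  -- trivial case: zstar = E
  rcases eq_or_lt_of_le hzstarleE with hEz | hEz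
  · rw [← hEz, sub_self, div_zero, zero_div, mul_zero]
  -- main case: zstar < E
  have hA : (0 : ℝ) < E - zstar := sub_pos.mpr hEz
  have hZ : (0 : ℝ) < E - z := sub_pos.mpr hz
  set lamstar : ℝ := (z - zstar) / (E - zstar) with hlamstar
  have hlamstar1 : lamstar < 1 := by
    rw [hlamstar, div_lt_one hA]; linarith
  have hIntP : interior K ⊆ {x : EuclideanSpace ℝ (Fin d) |
      MvPolynomial.eval (fun i => x i) P ≠ 0} :=
    hcomp ▸ connectedComponentIn_subset _ _
  have hPe : MvPolynomial.eval (fun i => e i) P ≠ 0 := hIntP he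
  have hqne : ∀ w, q w ≠ 0 := by
    intro w h
    have := hroots w
    rw [h] at this
    simp at this
    omega
  -- Key claim A : if l is below all roots of q w, then w - l•e ∈ interior K
  have claimA : ∀ (w : EuclideanSpace ℝ (Fin d)) (l : ℝ),
      (∀ r ∈ (q w).roots, l < r) → w - l • e ∈ interior K := by
    intro w l hl
    have hseg : segment ℝ (w - l • e) e ⊆ {x : EuclideanSpace ℝ (Fin d) |
        MvPolynomial.eval (fun i => x i) P ≠ 0} := by
      rintro p ⟨a, b, ha, hb, hab, rfl⟩
      rcases eq_or_lt_of_le ha with ha0 | ha0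
      · have hb1 : b = 1 := by linarith
        simp only [← ha0, hb1, zero_smul, one_smul, zero_add, Set.mem_setOf_eq]
        exact hPe
      · set s : ℝ := l - b / a with hs
        have hcoord : (fun i => (a • (w - l • e) + b • e) i)
            = fun i => a * ((w : EuclideanSpace ℝ (Fin d)) i - s * e i) := by
          funext i
          simp only [PiLp.add_apply, PiLp.smul_apply, PiLp.sub_apply, smul_eq_mul, hs]
          field_simp
          ring
        have heval : MvPolynomial.eval (fun i => (a • (w - l • e) + b • e) i) P
            = a ^ n * (q w).eval s := by
          rw [hcoord, homog_eval_mul P hP a _, hq]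
        have hqs : (q w).eval s ≠ 0 := by
          intro h0
          have hmem : s ∈ (q w).roots := Polynomial.mem_roots'.mpr ⟨hqne w, h0⟩
          have := hl s hmem
          have hba : 0 ≤ b / a := div_nonneg hb ha0.le
          rw [hs] at this
          linarith
        simp only [Set.mem_setOf_eq, heval]
        exact mul_ne_zero (pow_ne_zero n ha0.ne') hqs
    have hsub : segment ℝ (w - l • e) e ⊆ interior K := by
      rw [hcomp]
      exact (convex_segment _ _).isPreconnected.subset_connectedComponentIn
        (right_mem_segment ℝ _ _) hseg
    exact hsub (left_mem_segment ℝ _ _)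
  -- Key claim B : points of K have no negative roots
  have claimB : ∀ w ∈ K, ∀ s : ℝ, s < 0 → (q w).eval s ≠ 0 := by
    intro w hw s hs h0
    have hmem : (-s) • e + w ∈ interior K :=
      cone_add_mem_interior hKconv hKcone
        (cone_smul_mem_interior hKcone (by linarith) he) hw
    have hcoord : (fun i => ((-s) • e + w) i)
        = fun i => (w : EuclideanSpace ℝ (Fin d)) i - s * e i := by
      funext i
      simp only [PiLp.add_apply, PiLp.smul_apply, smul_eq_mul]
      ring
    have := hIntP hmem
    rw [Set.mem_setOf_eq, hcoord, ← hq] at this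
    exact this h0
  -- Key claim C : feasibility bound for level-z points
  have claimC : ∀ (w : EuclideanSpace ℝ (Fin d)), w ∈ S → ⟪c, w⟫ = z →
      ∀ l : ℝ, w - l • e ∈ K → l ≤ lamstar := by
    intro w hwS hwz
    have hmain : ∀ l : ℝ, l < 1 → w - l • e ∈ K → l ≤ lamstar := by
      intro l hl1 hlK
      have h1l : (0 : ℝ) < 1 - l := by linarith
      have hKmem : (1 - l)⁻¹ • (w - l • e) ∈ K := hKcone _ (by positivity) _ hlK
      have hSmem : (1 - l)⁻¹ • (w - e) + e ∈ S := by
        have := AffineSubspace.smul_vsub_vadd_mem S ((1 - l)⁻¹) hwS heS heS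
        simpa [vsub_eq_sub, vadd_eq_add, add_comm] using this
      have hEq : (1 - l)⁻¹ • (w - l • e) = (1 - l)⁻¹ • (w - e) + e := by
        have : w - l • e = (1 - l) • ((1 - l)⁻¹ • (w - e) + e) := by
          rw [smul_add, smul_inv_smul₀ h1l.ne']
          rw [sub_smul, one_smul]
          abel
        rw [this, smul_smul, inv_mul_cancel₀ h1l.ne', one_smul]
      have hge : zstar ≤ ⟪c, (1 - l)⁻¹ • (w - l • e)⟫ := by
        rw [hEq, ← hxsz]
        exact hxsmin _ hSmem (hEq ▸ hKmem)
      have hval : ⟪c, (1 - l)⁻¹ • (w - l • e)⟫ = (1 - l)⁻¹ * (z - l * E) := by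
        rw [inner_smul_right, inner_sub_right, inner_smul_right, hwz, hE]
      rw [hval] at hge
      have h2 : (1 - l) * zstar ≤ z - l * E := by
        have := mul_le_mul_of_nonneg_left hge h1l.le
        rwa [← mul_assoc, mul_inv_cancel₀ h1l.ne', one_mul] at this
      rw [hlamstar, le_div_iff₀ hA]
      nlinarith
    intro l hlK
    by_cases hl1 : l < 1
    · exact hmain l hl1 hlK
    · push_neg at hl1
      exfalso
      set l' : ℝ := (lamstar + 1) / 2 with hl'
      have hl'1 : l' < 1 := by rw [hl']; linarith
      have hl'l : l' ≤ l := by rw [hl']; linarith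
      have hl'K : w - l' • e ∈ K := by
        have hmem : (w - l • e) + (l - l') • e ∈ K := by
          rcases eq_or_lt_of_le hl'l with h | h
          · simpa [h] using (by simpa [h] using hlK : w - l • e ∈ K)
          · exact cone_add_mem hKconv hKcone hlK (hKcone _ (by linarith) _ heK)
        have : (w - l • e) + (l - l') • e = w - l' • e := by
          rw [sub_smul]; abel
        rwa [this] at hmem
      have := hmain l' hl'1 hl'K
      rw [hl'] at this
      linarith
  -- fhat w is at most any root of q w
  have hfhat_le_root : ∀ (w : EuclideanSpace ℝ (Fin d)) (r : ℝ),
      r ∈ (q w).roots → fhat w ≤ r := by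
    intro w r hr
    set Ssum : ℝ := (((q w).roots.map (fun lam => Real.exp (-(lam / μ)))).sum) with hSsum
    have hterm : Real.exp (-(r / μ)) ∈ (q w).roots.map (fun lam => Real.exp (-(lam / μ))) :=
      Multiset.mem_map_of_mem _ hr
    have hle : Real.exp (-(r / μ)) ≤ Ssum := by
      refine Multiset.single_le_sum ?_ _ hterm
      intro y hy
      obtain ⟨lam, _, rfl⟩ := Multiset.mem_map.mp hy
      positivity
    have hpos : (0 : ℝ) < Ssum := lt_of_lt_of_le (Real.exp_pos _) hle
    have hlog : -(r / μ) ≤ Real.log Ssum := (Real.le_log_iff_exp_le hpos).mpr hle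
    rw [hfhat w, ← hSsum]
    have hmul := mul_le_mul_of_nonneg_left hlog hμ.le
    have h3 : μ * (r / μ) = r := by field_simp
    nlinarith [hmul, h3]
  -- roots of level-z points are at most lamstar
  have hroot_le_lamstar : ∀ (w : EuclideanSpace ℝ (Fin d)), w ∈ S → ⟪c, w⟫ = z →
      ∀ r ∈ (q w).roots, (∀ r' ∈ (q w).roots, r ≤ r') → r ≤ lamstar := by
    intro w hwS hwz r hr hrmin
    by_contra hcon
    push_neg at hcon
    set l : ℝ := (lamstar + r) / 2 with hl
    have h1 : l < r := by rw [hl]; linarith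
    have h2 : lamstar < l := by rw [hl]; linarith
    have hmem : w - l • e ∈ K := interior_subset <| claimA w l (fun r' hr' =>
      lt_of_lt_of_le h1 (hrmin r' hr'))
    exact absurd (claimC w hwS hwz l hmem) (not_le.mpr h2)
  -- existence of a minimal root
  have hminroot : ∀ (w : EuclideanSpace ℝ (Fin d)),
      ∃ r ∈ (q w).roots, ∀ r' ∈ (q w).roots, r ≤ r' := by
    intro w
    have hne : (q w).roots.toFinset.Nonempty := by
      rw [Multiset.toFinset_nonempty]
      intro h
      have := hroots w
      rw [h] at this
      simp at this
      omega
    refine ⟨(q w).roots.toFinset.min' hne, ?_, ?_⟩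
    · exact Multiset.mem_toFinset.mp ((q w).roots.toFinset.min'_mem hne)
    · intro r' hr'
      exact Finset.min'_le _ _ (Multiset.mem_toFinset.mpr hr')
  -- uniform bound : fhat ≤ lamstar on the level-z slice
  have hfhat_le_lamstar : ∀ (w : EuclideanSpace ℝ (Fin d)), w ∈ S → ⟪c, w⟫ = z →
      fhat w ≤ lamstar := by
    intro w hwS hwz
    obtain ⟨r, hr, hrmin⟩ := hminroot w
    exact le_trans (hfhat_le_root w r hr) (hroot_le_lamstar w hwS hwz r hr hrmin)
  -- lamMin x facts
  set T : Set ℝ := {l : ℝ | x - l • e ∈ K} with hT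
  have hTbdd : BddAbove T := ⟨lamstar, fun l hl => claimC x hxS hxz l hl⟩
  have hTne : T.Nonempty := by
    obtain ⟨ε, hε, hball⟩ := Metric.isOpen_iff.mp isOpen_interior e he
    set l₀ : ℝ := -(‖(x : EuclideanSpace ℝ (Fin d))‖ / ε + 1) with hl₀
    have hl₀pos : (0 : ℝ) < -l₀ := by
      rw [hl₀, neg_neg]
      positivity
    refine ⟨l₀, ?_⟩
    have hmem : e + (-l₀)⁻¹ • x ∈ Metric.ball e ε := by
      rw [Metric.mem_ball, dist_eq_norm]
      have : e + (-l₀)⁻¹ • x - e = (-l₀)⁻¹ • x := by abel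
      rw [this, norm_smul]
      simp only [norm_inv, Real.norm_eq_abs, abs_of_pos hl₀pos]
      rw [inv_mul_eq_div, div_lt_iff₀ hl₀pos, hl₀, neg_neg]
      have h1 : ε * (‖(x : EuclideanSpace ℝ (Fin d))‖ / ε) = ‖x‖ := by
        field_simp
      nlinarith [norm_nonneg (x : EuclideanSpace ℝ (Fin d))]
    have hK2 : (-l₀) • (e + (-l₀)⁻¹ • x) ∈ K :=
      hKcone _ hl₀pos _ (interior_subset (hball hmem))
    have heq : (-l₀) • (e + (-l₀)⁻¹ • x) = x - l₀ • e := by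
      rw [smul_add, smul_inv_smul₀ hl₀pos.ne']
      rw [neg_smul]
      abel
    rw [hT, Set.mem_setOf_eq, ← heq]
    exact hK2
  have hlamx : lamMin x = sSup T := hlam x
  have hlamle : lamMin x ≤ lamstar := by
    rw [hlamx]
    exact csSup_le hTne (fun l hl => claimC x hxS hxz l hl)
  obtain ⟨r0, hr0, hr0min⟩ := hminroot x
  have hr0lam : r0 ≤ lamMin x := by
    by_contra hcon
    push_neg at hcon
    set l : ℝ := (lamMin x + r0) / 2 with hl
    have h1 : l < r0 := by rw [hl]; linarith
    have h2 : lamMin x < l := by rw [hl]; linarith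
    have hmem : l ∈ T := by
      have : x - l • e ∈ K := interior_subset <| claimA x l (fun r' hr' =>
        lt_of_lt_of_le h1 (hr0min r' hr'))
      exact this
    have := le_csSup hTbdd hmem
    rw [← hlamx] at this
    linarith
  have h2a : fhat x ≤ lamMin x := le_trans (hfhat_le_root x r0 hr0) hr0lam
  -- the witness point y₀
  set a : ℝ := 1 - lamstar with ha
  have hapos : (0 : ℝ) < a := by rw [ha]; linarith
  set y₀ : EuclideanSpace ℝ (Fin d) := a • xs + lamstar • e with hy₀
  have hy₀S : y₀ ∈ S := by
    have := AffineSubspace.smul_vsub_vadd_mem S lamstar heS hxsS hxsS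
    have heq : lamstar • (e -ᵥ xs) +ᵥ xs = y₀ := by
      rw [hy₀, vsub_eq_sub, vadd_eq_add, ha, sub_smul, one_smul, smul_sub]
      abel
    rwa [heq] at this
  have hy₀z : ⟪c, y₀⟫ = z := by
    rw [hy₀, inner_add_right, inner_smul_right, inner_smul_right, hxsz, ← hE]
    have hls : lamstar * (E - zstar) = z - zstar := by
      rw [hlamstar, div_mul_cancel₀ _ hA.ne']
    rw [ha]
    nlinarith
  have hy₀roots : ∀ r ∈ (q y₀).roots, lamstar ≤ r := by
    intro r hr
    by_contra hcon
    push_neg at hcon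
    have h0 : (q y₀).eval r = 0 := (Polynomial.mem_roots'.mp hr).2
    set s : ℝ := (r - lamstar) / a with hs
    have hsneg : s < 0 := by
      rw [hs]
      exact div_neg_of_neg_of_pos (by linarith) hapos
    have hcoord : (fun i => (y₀ : EuclideanSpace ℝ (Fin d)) i - r * e i)
        = fun i => a * ((xs : EuclideanSpace ℝ (Fin d)) i - s * e i) := by
      funext i
      rw [hy₀]
      simp only [PiLp.add_apply, PiLp.smul_apply, smul_eq_mul, hs]
      field_simp
      ring
    have heval : (q y₀).eval r = a ^ n * (q xs).eval s := by
      rw [hq, hcoord, homog_eval_mul P hP a _, hq]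
    rw [heval] at h0
    have : (q xs).eval s = 0 := by
      rcases mul_eq_zero.mp h0 with h | h
      · exact absurd h (pow_ne_zero n hapos.ne')
      · exact h
    exact claimB xs hxsK s hsneg this
  have hy₀fhat : lamstar - μ * Real.log n ≤ fhat y₀ := by
    set Ssum : ℝ := (((q y₀).roots.map (fun lam => Real.exp (-(lam / μ)))).sum) with hSsum
    have hcard0 : (q y₀).roots ≠ 0 := by
      intro h
      have := hroots y₀
      rw [h] at this
      simp at this
      omega
    obtain ⟨r1, hr1⟩ := Multiset.exists_mem_of_ne_zero hcard0
    have hpos : (0 : ℝ) < Ssum := by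
      have hterm : Real.exp (-(r1 / μ)) ∈
          (q y₀).roots.map (fun lam => Real.exp (-(lam / μ))) :=
        Multiset.mem_map_of_mem _ hr1
      refine lt_of_lt_of_le (Real.exp_pos _) (Multiset.single_le_sum ?_ _ hterm)
      intro y hy
      obtain ⟨lam, _, rfl⟩ := Multiset.mem_map.mp hy
      positivity
    have hub : Ssum ≤ (n : ℝ) * Real.exp (-(lamstar / μ)) := by
      have hcard : Multiset.card ((q y₀).roots.map (fun lam => Real.exp (-(lam / μ)))) = n := by
        rw [Multiset.card_map, hroots]
      have hbound := Multiset.sum_le_card_nsmul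
        ((q y₀).roots.map (fun lam => Real.exp (-(lam / μ))))
        (Real.exp (-(lamstar / μ)))
        (by
          intro y hy
          obtain ⟨lam, hlam', rfl⟩ := Multiset.mem_map.mp hy
          apply Real.exp_le_exp.mpr
          have h1 : lamstar ≤ lam := hy₀roots lam hlam'
          have h2 : lamstar / μ ≤ lam / μ := (div_le_div_iff_of_pos_right hμ).mpr h1
          linarith)
      rwa [hcard, nsmul_eq_mul] at hbound
    have hnpos : (0 : ℝ) < (n : ℝ) := Nat.cast_pos.mpr hn
    have hlog : Real.log Ssum ≤ Real.log n + (-(lamstar / μ)) := by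
      calc Real.log Ssum ≤ Real.log ((n : ℝ) * Real.exp (-(lamstar / μ))) :=
            Real.log_le_log hpos hub
        _ = Real.log n + (-(lamstar / μ)) := by
            rw [Real.log_mul hnpos.ne' (Real.exp_ne_zero _), Real.log_exp]
    rw [hfhat y₀, ← hSsum]
    have := mul_le_mul_of_nonneg_left hlog hμ.le
    have hμμ : μ * (lamstar / μ) = lamstar := by field_simp
    nlinarith
  -- fstar bound
  have hbdd : BddAbove {r : ℝ | ∃ y, y ∈ S ∧ ⟪c, y⟫ = z ∧ r = fhat y} := by
    refine ⟨lamstar, ?_⟩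
    rintro r ⟨y, hyS, hyz, rfl⟩
    exact hfhat_le_lamstar y hyS hyz
  have hfstar_ge : lamstar - μ * Real.log n ≤ fstar := by
    rw [hfstar]
    exact le_trans hy₀fhat (le_csSup hbdd ⟨y₀, hy₀S, hy₀z, rfl⟩)
  -- final algebra
  have hlam1 : lamMin x < 1 := lt_of_le_of_lt hlamle hlamstar1
  have hb : (0 : ℝ) < 1 - lamMin x := by linarith
  have hu : (0 : ℝ) < (1 - lamMin x)⁻¹ := inv_pos.mpr hb
  have hub' : (1 - lamMin x)⁻¹ * (1 - lamMin x) = 1 := inv_mul_cancel₀ hb.ne'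
  have hπc : ⟪c, π⟫ = E + (1 - lamMin x)⁻¹ * (z - E) := by
    rw [hπ, inner_add_right, inner_smul_right, inner_sub_right, hxz, hE]
  set F : ℝ := fstar - fhat x + μ * Real.log n with hF
  have hFge : lamstar - lamMin x ≤ F := by
    rw [hF]
    have h1 : lamstar - μ * Real.log n ≤ fstar := hfstar_ge
    have h2 : fhat x ≤ lamMin x := h2a
    linarith
  set A : ℝ := E - zstar with hAdef
  set Z : ℝ := E - z with hZdef
  set u : ℝ := (1 - lamMin x)⁻¹ with hudef
  set b : ℝ := 1 - lamMin x with hbdef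
  have hlsA : lamstar * A = z - zstar := by
    rw [hlamstar, hAdef, div_mul_cancel₀ _ hA.ne']
  have hFA : b * A - Z ≤ F * A := by
    have := mul_le_mul_of_nonneg_right hFge hA.le
    have hexp : (lamstar - lamMin x) * A = lamstar * A - lamMin x * A := by ring
    rw [hexp, hlsA] at this
    have : z - zstar - lamMin x * A ≤ F * A := this
    rw [hbdef, hZdef, hAdef] at *
    nlinarith
  have hgoal : (⟪c, π⟫ - zstar) / A ≤ F * (A / Z) := by
    rw [hπc, mul_div_assoc' F A Z, div_le_div_iff₀ hA hZ]
    have hlhs : E + u * (z - E) - zstar = A - u * Z := by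
      rw [hAdef, hZdef]; ring
    rw [hlhs]
    have hkey : 0 ≤ b * A ^ 2 - 2 * A * Z + u * Z ^ 2 := by
      have hsq : 0 ≤ b * (A - u * Z) ^ 2 := mul_nonneg hb.le (sq_nonneg _)
      have hub2 : u * b = 1 := by rw [hudef, hbdef]; exact inv_mul_cancel₀ hb.ne'
      nlinarith [hsq, hub2, sq_nonneg Z, hZ.le, hu.le]
    have hFAA := mul_le_mul_of_nonneg_right hFA hA.le
    nlinarith [hkey, hFAA]
  exact hgoal
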